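/- Let K be a locally compact Hausdorff cone with vertex 0 and dilation group g_λ (λ ∈ ℝ₊) fixing the vertex, such that for every compact Q ⊂ K and neighborhood V of 0, g_λ(Q) ⊂ V for all small λ. Let H̃ be a Hilbert space that is a nondegenerate *-module over C_0(K) satisfying the localization condition at the vertex, and let U_λ be a strongly continuous one-parameter unitary group on H̃ with U_λ φ U_λ^{-1} = φ ∘ g_λ for all φ ∈ C_0(K). Then U_λ converges weakly to 0 both as λ → 0 and as λ → ∞. -/

import Mathlib

open Filter Topology ZeroAtInfty

section Cone

variable {K : Type*} [TopologicalSpace K] [LocallyCompactSpace K] [T2Space K]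
variable {H : Type*} [NormedAddCommGroup H] [InnerProductSpace ℂ H] [CompleteSpace H]

/-- The axioms of a cone: a distinguished vertex together with a multiplicative
dilation group `g_λ` (`λ > 0`) fixing the vertex, such that every compact set is moved
into any given neighborhood of the vertex by all sufficiently small dilations. -/
structure ConeStruct (K : Type*) [TopologicalSpace K] where
  vertex : K
  g : ℝ → K → K
  g_cont : ∀ l : ℝ, 0 < l → Continuous (g l)
  g_one : g 1 = id
  g_mul : ∀ l m : ℝ, 0 < l → 0 < m → ∀ z, g (l * m) z = g l (g m z)
  g_vertex : ∀ l : ℝ, 0 < l → g l vertex = vertex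
  g_shrink : ∀ Q : Set K, IsCompact Q → ∀ V ∈ 𝓝 vertex,
    ∃ ε > (0:ℝ), ∀ l : ℝ, 0 < l → l < ε → g l '' Q ⊆ V

/-- The localizing class `F₀` at the vertex of the cone: compactly supported continuous
functions with values in `[0,1]` equal to `1` in a neighborhood of the vertex. -/
def coneLocClass (c : ConeStruct K) : Set C₀(K, ℂ) :=
  {φ | HasCompactSupport ⇑φ ∧ (∀ z, (φ z).re ∈ Set.Icc (0:ℝ) 1 ∧ (φ z).im = 0) ∧
    ∃ V ∈ 𝓝 c.vertex, ∀ z ∈ V, φ z = 1}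

variable (π : C₀(K, ℂ) →⋆ₙₐ[ℂ] (H →L[ℂ] H))

/-- A strongly continuous one-parameter unitary group `U_λ` (`λ > 0`). -/
def IsUnitaryDilGroup (U : ℝ → H →L[ℂ] H) : Prop :=
  U 1 = 1 ∧ (∀ l m : ℝ, 0 < l → 0 < m → U (l * m) = U l ∘L U m) ∧
    (∀ l : ℝ, 0 < l → ∀ v, ‖U l v‖ = ‖v‖) ∧
    ∀ v : H, ContinuousOn (fun l => U l v) (Set.Ioi (0:ℝ))

/-- Compatibility of the unitary group with the module structure:
`U_λ φ U_λ⁻¹ = φ ∘ g_λ`, stated as `π(φ ∘ g_λ) U_λ = U_λ π(φ)`. -/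
def DilCompatible (c : ConeStruct K) (U : ℝ → H →L[ℂ] H) : Prop :=
  ∀ l : ℝ, 0 < l → ∀ φ ψ : C₀(K, ℂ), (∀ z, ψ z = φ (c.g l z)) →
    (π ψ) ∘L (U l) = (U l) ∘L (π φ)

/-- The localization condition at the vertex: the localizing class `F₀`, directed by
`φ ≺ ψ ↔ φψ = ψ`, converges strongly to `0`. -/
def VertexLocConv (c : ConeStruct K) : Prop :=
  ∀ (v : H) (ε : ℝ), 0 < ε →
    ∃ φ ∈ coneLocClass c, ∀ ψ ∈ coneLocClass c, φ * ψ = ψ → ‖π ψ v‖ < ε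

/-- Nondegeneracy: the strong closure of the image of `C₀(K)` contains the identity. -/
def NondegenerateModule : Prop :=
  ∀ (v : H) (ε : ℝ), 0 < ε → ∃ φ : C₀(K, ℂ), ‖π φ v - v‖ < ε

end Cone

section AuxLemmas

variable {K : Type*} [TopologicalSpace K] [LocallyCompactSpace K] [T2Space K]
variable {H : Type*} [NormedAddCommGroup H] [InnerProductSpace ℂ H] [CompleteSpace H]

/-- There is an element of the localizing class equal to `1` on any given compact set. -/
lemma coneLocClass_exists_one (c : ConeStruct K) {S : Set K} (hS : IsCompact S) :
    ∃ θ ∈ coneLocClass c, ∀ z ∈ S, θ z = 1 := by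
  obtain ⟨L, hL, hSL⟩ := exists_compact_superset (hS.union isCompact_singleton)
  obtain ⟨f, hf1, -, hfc, hf01⟩ :=
    exists_continuous_one_zero_of_isCompact hL isClosed_empty (Set.disjoint_empty _)
  have hone : ∀ z ∈ interior L, ((f z : ℝ) : ℂ) = 1 := fun z hz => by
    simpa using congrArg (fun r : ℝ => (r : ℂ)) (hf1 (interior_subset hz))
  refine ⟨⟨⟨fun z => (f z : ℂ), Complex.continuous_ofReal.comp f.continuous⟩,
      ((hfc.comp_left (g := (fun x : ℝ => (x:ℂ))) Complex.ofReal_zero)).is_zero_at_infty⟩,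
    ⟨(hfc.comp_left (g := (fun x : ℝ => (x:ℂ))) Complex.ofReal_zero), fun z => by
      simpa using hf01 z,
      interior L, isOpen_interior.mem_nhds (hSL (Set.mem_union_right _ rfl)), hone⟩,
    fun z hz => hone z (hSL (Set.mem_union_left _ hz))⟩

lemma coneLocClass_norm_le_one (c : ConeStruct K) {θ : C₀(K, ℂ)}
    (hθ : θ ∈ coneLocClass c) : ‖θ‖ ≤ 1 := by
  rw [← ZeroAtInftyContinuousMap.norm_toBCF_eq_norm]
  refine (BoundedContinuousFunction.norm_le zero_le_one).mpr fun z => ?_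
  obtain ⟨⟨h0, h1⟩, him⟩ := hθ.2.1 z
  have : θ z = ((θ z).re : ℂ) := Complex.ext rfl (by simp [him])
  rw [show θ.toBCF z = θ z from rfl, this, Complex.norm_real, Real.norm_eq_abs]
  rwa [abs_of_nonneg h0]

/-- Upgrade nondegeneracy: the identity can be approximated by localizing functions. -/
lemma exists_loc_approx (c : ConeStruct K) (π : C₀(K, ℂ) →⋆ₙₐ[ℂ] (H →L[ℂ] H))
    (hnd : NondegenerateModule π) (v : H) (ε : ℝ) (hε : 0 < ε) :
    ∃ θ ∈ coneLocClass c, ‖π θ v - v‖ < ε := by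
  obtain ⟨ρ, hρ⟩ := hnd v (ε/3) (by positivity)
  set δ : ℝ := ε / (3 * (‖v‖ + 1)) with hδdef
  have hδ : 0 < δ := by positivity
  have hco : ∀ᶠ z in cocompact K, ‖ρ z‖ < δ := by
    have := Metric.tendsto_nhds.mp (zero_at_infty ρ) δ hδ
    simpa [dist_zero_right] using this
  obtain ⟨S, hSc, hS⟩ := Filter.mem_cocompact.mp hco
  obtain ⟨θ, hθF, hθ1⟩ := coneLocClass_exists_one c hSc
  refine ⟨θ, hθF, ?_⟩
  have hθnorm := coneLocClass_norm_le_one c hθF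
  -- sup-norm bound on θ * ρ - ρ
  have hsup : ‖θ * ρ - ρ‖ ≤ δ := by
    rw [← ZeroAtInftyContinuousMap.norm_toBCF_eq_norm]
    refine (BoundedContinuousFunction.norm_le hδ.le).mpr fun z => ?_
    have hz : ((θ * ρ - ρ).toBCF z : ℂ) = θ z * ρ z - ρ z := rfl
    rw [hz]
    by_cases hzS : z ∈ S
    · rw [hθ1 z hzS]; simpa using hδ.le
    · have hρz : ‖ρ z‖ < δ := hS hzS
      have : ‖θ z * ρ z - ρ z‖ = ‖θ z - 1‖ * ‖ρ z‖ := by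
        rw [← norm_mul]; ring_nf
      rw [this]
      have hb : ‖θ z - 1‖ ≤ 1 := by
        obtain ⟨⟨h0, h1⟩, him⟩ := hθF.2.1 z
        have : θ z - 1 = (((θ z).re - 1 : ℝ) : ℂ) := by
          apply Complex.ext <;> simp [him]
        rw [this, Complex.norm_real, Real.norm_eq_abs, abs_le]
        constructor <;> linarith
      calc ‖θ z - 1‖ * ‖ρ z‖ ≤ 1 * ‖ρ z‖ :=
            mul_le_mul_of_nonneg_right hb (norm_nonneg _)
        _ = ‖ρ z‖ := one_mul _
        _ ≤ δ := hρz.le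
  have hπcontr : ∀ f : C₀(K, ℂ), ‖π f‖ ≤ ‖f‖ := fun f =>
    NonUnitalStarAlgHom.norm_apply_le π f
  have h1 : ‖π θ v - π θ (π ρ v)‖ ≤ ε/3 := by
    have : π θ v - π θ (π ρ v) = π θ (v - π ρ v) := by simp [map_sub]
    rw [this]
    calc ‖π θ (v - π ρ v)‖ ≤ ‖π θ‖ * ‖v - π ρ v‖ := (π θ).le_opNorm _
      _ ≤ 1 * (ε/3) := by
          apply mul_le_mul ((hπcontr θ).trans hθnorm) _ (norm_nonneg _) zero_le_one
          rw [norm_sub_rev]; exact hρ.le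
      _ = ε/3 := one_mul _
  have h2 : ‖π (θ * ρ) v - π ρ v‖ ≤ ε/3 := by
    have : π (θ * ρ) v - π ρ v = π (θ * ρ - ρ) v := by simp [map_sub]
    rw [this]
    calc ‖π (θ * ρ - ρ) v‖ ≤ ‖π (θ * ρ - ρ)‖ * ‖v‖ := (π _).le_opNorm _
      _ ≤ δ * ‖v‖ := mul_le_mul_of_nonneg_right ((hπcontr _).trans hsup) (norm_nonneg _)
      _ ≤ ε/3 := by
          rw [hδdef]
          rw [div_mul_eq_mul_div, div_le_div_iff₀ (by positivity) (by norm_num)]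
          nlinarith [norm_nonneg v]
  have hmul : π θ (π ρ v) = π (θ * ρ) v := by
    rw [map_mul]; rfl
  have h3 : ‖π θ v - v‖ ≤
      ‖π θ v - π θ (π ρ v)‖ + ‖π (θ * ρ) v - π ρ v‖ + ‖π ρ v - v‖ := by
    have e : π θ v - v = (π θ v - π θ (π ρ v)) + (π (θ * ρ) v - π ρ v) + (π ρ v - v) := by
      rw [hmul]; abel
    rw [e]
    exact (norm_add_le _ _).trans (by gcongr; exact norm_add_le _ _)
  linarith

/-- Main estimate: weak convergence to `0` at infinity. -/
lemma aux_atTop (c : ConeStruct K) (π : C₀(K, ℂ) →⋆ₙₐ[ℂ] (H →L[ℂ] H))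
    (hnd : NondegenerateModule π) (hloc : VertexLocConv π c)
    (U : ℝ → H →L[ℂ] H) (hU : IsUnitaryDilGroup U) (hcomp : DilCompatible π c U)
    (v w : H) :
    Tendsto (fun l : ℝ => (inner ℂ w (U l v) : ℂ)) atTop (𝓝 0) := by
  rw [NormedAddCommGroup.tendsto_nhds_zero]
  intro ε hε
  have hw1 : (0:ℝ) < ‖w‖ + 1 := by positivity
  have hv1 : (0:ℝ) < ‖v‖ + 1 := by positivity
  set ε₁ : ℝ := ε / (2 * (‖w‖ + 1)) with hε₁def
  set ε₂ : ℝ := ε / (2 * (‖v‖ + 1)) with hε₂def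
  have hε₁ : 0 < ε₁ := by positivity
  have hε₂ : 0 < ε₂ := by positivity
  obtain ⟨θ, hθF, hθv⟩ := exists_loc_approx c π hnd v ε₁ hε₁
  obtain ⟨φ, hφF, hφ⟩ := hloc w ε₂ hε₂
  obtain ⟨V, hV, hφ1⟩ := hφF.2.2
  obtain ⟨δ, hδ, hshrink⟩ := c.g_shrink (tsupport ⇑θ) hθF.1 V hV
  filter_upwards [eventually_gt_atTop (1/δ), eventually_gt_atTop 0] with l hl hl0
  have hinv : 0 < l⁻¹ := by positivity
  have hinvδ : l⁻¹ < δ := by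
    have hmul : 1 < l * δ := by have := (div_lt_iff₀ hδ).mp hl; linarith
    nlinarith [inv_mul_cancel₀ (ne_of_gt hl0), hinv]
  -- the dilated function ξ = θ ∘ g_l
  have hgll : ∀ z : K, c.g l⁻¹ (c.g l z) = z := by
    intro z
    rw [← c.g_mul l⁻¹ l hinv hl0, inv_mul_cancel₀ (ne_of_gt hl0), c.g_one, id]
  have hsupp : ∀ z : K, θ (c.g l z) ≠ 0 → z ∈ c.g l⁻¹ '' tsupport ⇑θ :=
    fun z hz => ⟨c.g l z, subset_tsupport _ hz, hgll z⟩
  have himg : c.g l⁻¹ '' tsupport ⇑θ ⊆ V := hshrink l⁻¹ hinv hinvδ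
  have hcs : HasCompactSupport (fun z => θ (c.g l z)) :=
    HasCompactSupport.intro (hθF.1.image (c.g_cont l⁻¹ hinv))
      (fun z hz => by by_contra h; exact hz (hsupp z h))
  set ξ : C₀(K, ℂ) := ⟨⟨fun z => θ (c.g l z), θ.continuous.comp (c.g_cont l hl0)⟩,
    hcs.is_zero_at_infty⟩ with hξdef
  have hξapp : ∀ z, ξ z = θ (c.g l z) := fun _ => rfl
  have hξF : ξ ∈ coneLocClass c := by
    obtain ⟨Vθ, hVθ, hθ1⟩ := hθF.2.2
    refine ⟨hcs, fun z => hθF.2.1 (c.g l z), (c.g l) ⁻¹' Vθ, ?_, fun z hz => hθ1 _ hz⟩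
    exact (c.g_cont l hl0).continuousAt.preimage_mem_nhds
      (by rw [c.g_vertex l hl0]; exact hVθ)
  have hφξ : φ * ξ = ξ := by
    ext z
    show φ z * ξ z = ξ z
    by_cases h : θ (c.g l z) = 0
    · rw [hξapp, h, mul_zero]
    · rw [hφ1 z (himg (hsupp z h)), one_mul]
  have hξw : ‖π ξ w‖ < ε₂ := hφ ξ hξF hφξ
  have hsa : star ξ = ξ := by
    ext z
    show star (ξ z) = ξ z
    rw [Complex.star_def, Complex.conj_eq_iff_im]
    exact (hθF.2.1 (c.g l z)).2
  have hcompat : U l ((π θ) v) = (π ξ) (U l v) := by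
    have h := hcomp l hl0 θ ξ hξapp
    calc U l ((π θ) v) = ((U l) ∘L (π θ)) v := rfl
      _ = ((π ξ) ∘L (U l)) v := by rw [h]
      _ = (π ξ) (U l v) := rfl
  have hadj : (inner ℂ w ((π ξ) (U l v)) : ℂ) = inner ℂ ((π ξ) w) (U l v) := by
    rw [← ContinuousLinearMap.adjoint_inner_left]
    congr 1
    rw [← ContinuousLinearMap.star_eq_adjoint, ← map_star, hsa]
  have hdec : (inner ℂ w (U l v) : ℂ) =
      inner ℂ w (U l (v - (π θ) v)) + inner ℂ ((π ξ) w) (U l v) := by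
    rw [← hadj, ← hcompat, ← inner_add_right, ← map_add, sub_add_cancel]
  have hnorm1 : ‖U l (v - (π θ) v)‖ = ‖v - (π θ) v‖ := hU.2.2.1 l hl0 _
  have hnorm2 : ‖U l v‖ = ‖v‖ := hU.2.2.1 l hl0 v
  have b1 : ‖w‖ * ‖v - (π θ) v‖ < ε/2 := by
    have e1 : ‖w‖ * ‖v - (π θ) v‖ ≤ ‖w‖ * ε₁ :=
      mul_le_mul_of_nonneg_left (by rw [norm_sub_rev]; exact hθv.le) (norm_nonneg w)
    have e2 : ‖w‖ * ε₁ < (‖w‖ + 1) * ε₁ := mul_lt_mul_of_pos_right (lt_add_one _) hε₁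
    have e3 : (‖w‖ + 1) * ε₁ = ε/2 := by
      rw [hε₁def]; field_simp
    linarith
  have b2 : ‖(π ξ) w‖ * ‖v‖ < ε/2 := by
    have e1 : ‖(π ξ) w‖ * ‖v‖ ≤ ε₂ * ‖v‖ :=
      mul_le_mul_of_nonneg_right hξw.le (norm_nonneg v)
    have e2 : ε₂ * ‖v‖ < ε₂ * (‖v‖ + 1) := mul_lt_mul_of_pos_left (lt_add_one _) hε₂
    have e3 : ε₂ * (‖v‖ + 1) = ε/2 := by
      rw [hε₂def]; field_simp
    linarith
  calc ‖(inner ℂ w (U l v) : ℂ)‖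
      ≤ ‖(inner ℂ w (U l (v - (π θ) v)) : ℂ)‖ + ‖(inner ℂ ((π ξ) w) (U l v) : ℂ)‖ := by
        rw [hdec]; exact norm_add_le _ _
    _ ≤ ‖w‖ * ‖v - (π θ) v‖ + ‖(π ξ) w‖ * ‖v‖ :=
        add_le_add ((norm_inner_le_norm _ _).trans (by rw [hnorm1]))
          ((norm_inner_le_norm _ _).trans (by rw [hnorm2]))
    _ < ε := by linarith

end AuxLemmas

/-- For a cone `K` with dilation group `g_λ`, a nondegenerate
`C₀(K)`-module Hilbert space `H` satisfying the localization condition at the vertex,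
and a compatible strongly continuous one-parameter unitary group `U_λ`, the group `U_λ`
converges weakly to `0` both as `λ → 0⁺` and as `λ → ∞`. -/
theorem dilation_group_weakly_tendsto_zero
    {K : Type*} [TopologicalSpace K] [LocallyCompactSpace K] [T2Space K]
    {H : Type*} [NormedAddCommGroup H] [InnerProductSpace ℂ H] [CompleteSpace H]
    (c : ConeStruct K) (π : C₀(K, ℂ) →⋆ₙₐ[ℂ] (H →L[ℂ] H))
    (hnd : NondegenerateModule π) (hloc : VertexLocConv π c)
    (U : ℝ → H →L[ℂ] H) (hU : IsUnitaryDilGroup U) (hcomp : DilCompatible π c U) :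
    ∀ v w : H,
      Tendsto (fun l : ℝ => (inner ℂ w (U l v) : ℂ)) (𝓝[>] (0:ℝ)) (𝓝 0) ∧
      Tendsto (fun l : ℝ => (inner ℂ w (U l v) : ℂ)) atTop (𝓝 0) := by
  intro v w
  have hmain : ∀ v w : H, Tendsto (fun l : ℝ => (inner ℂ w (U l v) : ℂ)) atTop (𝓝 0) :=
    fun v w => aux_atTop c π hnd hloc U hU hcomp v w
  refine ⟨?_, hmain v w⟩
  have h1 : Tendsto (fun l : ℝ => l⁻¹) (𝓝[>] (0:ℝ)) atTop := tendsto_inv_nhdsGT_zero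
  have h2 : Tendsto (fun l : ℝ => (inner ℂ v (U l⁻¹ w) : ℂ)) (𝓝[>] (0:ℝ)) (𝓝 0) :=
    (hmain w v).comp h1
  have h3 : Tendsto (fun l : ℝ => (inner ℂ (U l⁻¹ w) v : ℂ)) (𝓝[>] (0:ℝ)) (𝓝 0) := by
    have h4 := (Complex.continuous_conj.tendsto 0).comp h2
    simpa [Function.comp_def] using h4
  refine h3.congr' ?_
  filter_upwards [self_mem_nhdsWithin] with l hl
  have hl0 : (0:ℝ) < l := hl
  have hinv : (0:ℝ) < l⁻¹ := by positivity
  have hUw : U l (U l⁻¹ w) = w := by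
    have h := hU.2.1 l l⁻¹ hl0 hinv
    calc U l (U l⁻¹ w) = (U l ∘L U l⁻¹) w := rfl
      _ = U (l * l⁻¹) w := by rw [← h]
      _ = w := by rw [mul_inv_cancel₀ (ne_of_gt hl0), hU.1]; rfl
  set f : H →ₗᵢ[ℂ] H := ⟨(U l).toLinearMap, hU.2.2.1 l hl0⟩ with hf
  calc (inner ℂ (U l⁻¹ w) v : ℂ)
      = inner ℂ (U l (U l⁻¹ w)) (U l v) := (f.inner_map_map _ _).symm
    _ = inner ℂ w (U l v) := by rw [hUw]
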